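/- arXiv:1911.11332 — 2 statements merged into one kernel-verified Lean document; each statement's English description precedes it below -/
import Mathlib

section
/- Let w : [0,∞) → ℝ be a bounded continuous nonnegative function with ‖w‖_∞ > 0, let δ > 0, let 0 < ζ < 1, and set Δ = ζ·δ/(2‖w‖_∞). Let t₀ < t₁ and let μ, η : [t₀, t₁] → (finite nonnegative Borel measures on [0,∞)) be continuous with respect to the total variation norm and satisfy ∫ w dμ(s) ≥ δ and ∫ w dη(s) ≥ δ for all s ∈ [t₀, t₁]. Then for every continuously differentiable g : [0,∞) → ℝ with ‖g‖_∞ ≤ 1 and ‖g'‖_∞ ≤ 1, and every t ∈ [t₀, min(t₁, t₀ + Δ)], one has |∫_{t₀}^t [ (∫ g'·w dμ(s))/(∫ w dμ(s)) − (∫ g'·w dη(s))/(∫ w dη(s)) ] ds| ≤ ζ · sup_{s ∈ [t₀, t₁]} ‖μ(s) − η(s)‖_TV. In particular the Picard iteration map for the fluid model contracts the pairing against every such test function by the factor ζ on time intervals of length at most Δ, a bound independent of t₀. -/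
open MeasureTheory

/-- The total variation norm `‖μ - η‖_TV` of the difference of two finite measures. -/
noncomputable def tvNorm (μ η : Measure ℝ) [IsFiniteMeasure μ] [IsFiniteMeasure η] : ℝ :=
  ((μ.toSignedMeasure - η.toSignedMeasure).totalVariation Set.univ).toReal

/-- The supremum norm `‖f‖_∞` of a real-valued function. -/
noncomputable def supNorm (f : ℝ → ℝ) : ℝ := ⨆ x, |f x|

lemma jordan_measure_eq (a b : Measure ℝ) [IsFiniteMeasure a] [IsFiniteMeasure b] :
    a + (a.toSignedMeasure - b.toSignedMeasure).toJordanDecomposition.negPart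
      = b + (a.toSignedMeasure - b.toSignedMeasure).toJordanDecomposition.posPart := by
  set s := a.toSignedMeasure - b.toSignedMeasure with hs
  have hspec := s.toSignedMeasure_toJordanDecomposition
  rw [JordanDecomposition.toSignedMeasure] at hspec
  rw [← Measure.toSignedMeasure_eq_toSignedMeasure_iff]
  rw [Measure.toSignedMeasure_add, Measure.toSignedMeasure_add]
  exact ((sub_eq_sub_iff_add_eq_add.mp hspec).symm.trans (add_comm _ _))

lemma tvNorm_eq (a b : Measure ℝ) [IsFiniteMeasure a] [IsFiniteMeasure b] :
    tvNorm a b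
      = ((a.toSignedMeasure - b.toSignedMeasure).toJordanDecomposition.posPart Set.univ).toReal
      + ((a.toSignedMeasure - b.toSignedMeasure).toJordanDecomposition.negPart Set.univ).toReal := by
  rw [tvNorm, SignedMeasure.totalVariation, Measure.add_apply,
    ENNReal.toReal_add (measure_ne_top _ _) (measure_ne_top _ _)]

lemma tvNorm_nonneg (a b : Measure ℝ) [IsFiniteMeasure a] [IsFiniteMeasure b] :
    0 ≤ tvNorm a b := ENNReal.toReal_nonneg

lemma tvNorm_symm (a b : Measure ℝ) [IsFiniteMeasure a] [IsFiniteMeasure b] :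
    tvNorm a b = tvNorm b a := by
  rw [tvNorm, tvNorm, ← neg_sub a.toSignedMeasure, SignedMeasure.totalVariation_neg]

lemma integral_diff_le_tv (a b : Measure ℝ) [IsFiniteMeasure a] [IsFiniteMeasure b]
    (f : ℝ → ℝ) (hf : Continuous f) (K : ℝ) (hK : ∀ x, |f x| ≤ K) :
    |∫ x, f x ∂a - ∫ x, f x ∂b| ≤ K * tvNorm a b := by
  have hK0 : 0 ≤ K := le_trans (abs_nonneg _) (hK 0)
  set p := (a.toSignedMeasure - b.toSignedMeasure).toJordanDecomposition.posPart with hp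
  set n := (a.toSignedMeasure - b.toSignedMeasure).toJordanDecomposition.negPart with hn
  have hint : ∀ (m : Measure ℝ) [IsFiniteMeasure m], Integrable f m := by
    intro m _
    exact ⟨hf.aestronglyMeasurable,
      MeasureTheory.HasFiniteIntegral.of_bounded (C := K)
        (Filter.Eventually.of_forall fun x => by simpa [Real.norm_eq_abs] using hK x)⟩
  have key : ∫ x, f x ∂a + ∫ x, f x ∂n = ∫ x, f x ∂b + ∫ x, f x ∂p := by
    rw [← integral_add_measure (hint a) (hint n), ← integral_add_measure (hint b) (hint p),
      jordan_measure_eq a b]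
  have hb : ∀ (m : Measure ℝ) [IsFiniteMeasure m],
      |∫ x, f x ∂m| ≤ K * (m Set.univ).toReal := by
    intro m _
    have := norm_integral_le_of_norm_le_const (f := f) (μ := m) (C := K)
      (Filter.Eventually.of_forall fun x => by rw [Real.norm_eq_abs]; exact hK x)
    rwa [Real.norm_eq_abs] at this
  have h1 := hb p
  have h2 := hb n
  have : ∫ x, f x ∂a - ∫ x, f x ∂b = ∫ x, f x ∂p - ∫ x, f x ∂n := by linarith
  rw [this, tvNorm_eq]
  calc |∫ x, f x ∂p - ∫ x, f x ∂n| ≤ |∫ x, f x ∂p| + |∫ x, f x ∂n| := abs_sub _ _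
    _ ≤ K * (p Set.univ).toReal + K * (n Set.univ).toReal := add_le_add h1 h2
    _ = K * ((p Set.univ).toReal + (n Set.univ).toReal) := by ring

lemma tv_le_of_eq_sub (P N : Measure ℝ) [IsFiniteMeasure P] [IsFiniteMeasure N] :
    (P.toSignedMeasure - N.toSignedMeasure).totalVariation Set.univ
      ≤ P Set.univ + N Set.univ := by
  set j := (P.toSignedMeasure - N.toSignedMeasure).toJordanDecomposition with hj
  have hmeas : P + j.negPart = N + j.posPart := jordan_measure_eq P N
  obtain ⟨T, hT, hpT, hnTc⟩ := j.mutuallySingular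
  have hpos : j.posPart Set.univ ≤ P Set.univ := by
    have h1 : j.posPart Set.univ = j.posPart Tᶜ := by
      rw [← measure_add_measure_compl hT, hpT, zero_add]
    have h2 : j.posPart Tᶜ ≤ (N + j.posPart) Tᶜ := by
      rw [Measure.add_apply]; exact le_add_self
    rw [← hmeas, Measure.add_apply, hnTc, add_zero] at h2
    exact h1 ▸ h2.trans (measure_mono (Set.subset_univ _))
  have hneg : j.negPart Set.univ ≤ N Set.univ := by
    have h1 : j.negPart Set.univ = j.negPart T := by
      rw [← measure_add_measure_compl hT, hnTc, add_zero]
    have h2 : j.negPart T ≤ (P + j.negPart) T := by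
      rw [Measure.add_apply]; exact le_add_self
    rw [hmeas, Measure.add_apply, hpT, add_zero] at h2
    exact h1 ▸ h2.trans (measure_mono (Set.subset_univ _))
  calc (P.toSignedMeasure - N.toSignedMeasure).totalVariation Set.univ
      = j.posPart Set.univ + j.negPart Set.univ := by
        rw [SignedMeasure.totalVariation, Measure.add_apply]
    _ ≤ P Set.univ + N Set.univ := add_le_add hpos hneg

lemma tvNorm_triangle (a b c : Measure ℝ)
    [IsFiniteMeasure a] [IsFiniteMeasure b] [IsFiniteMeasure c] :
    tvNorm a c ≤ tvNorm a b + tvNorm b c := by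
  set j1 := (a.toSignedMeasure - b.toSignedMeasure).toJordanDecomposition with hj1
  set j2 := (b.toSignedMeasure - c.toSignedMeasure).toJordanDecomposition with hj2
  have hspec1 : j1.posPart.toSignedMeasure - j1.negPart.toSignedMeasure
      = a.toSignedMeasure - b.toSignedMeasure :=
    (a.toSignedMeasure - b.toSignedMeasure).toSignedMeasure_toJordanDecomposition
  have hspec2 : j2.posPart.toSignedMeasure - j2.negPart.toSignedMeasure
      = b.toSignedMeasure - c.toSignedMeasure :=
    (b.toSignedMeasure - c.toSignedMeasure).toSignedMeasure_toJordanDecomposition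
  have hsum : a.toSignedMeasure - c.toSignedMeasure
      = (j1.posPart + j2.posPart).toSignedMeasure
        - (j1.negPart + j2.negPart).toSignedMeasure := by
    rw [Measure.toSignedMeasure_add, Measure.toSignedMeasure_add]
    calc a.toSignedMeasure - c.toSignedMeasure
        = (a.toSignedMeasure - b.toSignedMeasure)
          + (b.toSignedMeasure - c.toSignedMeasure) := by abel
      _ = (j1.posPart.toSignedMeasure - j1.negPart.toSignedMeasure)
          + (j2.posPart.toSignedMeasure - j2.negPart.toSignedMeasure) := by
            rw [hspec1, hspec2]
      _ = _ := by abel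
  have hle : (a.toSignedMeasure - c.toSignedMeasure).totalVariation Set.univ
      ≤ (j1.posPart + j2.posPart) Set.univ + (j1.negPart + j2.negPart) Set.univ := by
    rw [hsum]; exact tv_le_of_eq_sub _ _
  have hfin : ((j1.posPart + j2.posPart) Set.univ + (j1.negPart + j2.negPart) Set.univ) ≠ ⊤ := by
    simp [Measure.add_apply, ENNReal.add_ne_top, measure_ne_top]
  have := ENNReal.toReal_le_toReal (a := (a.toSignedMeasure - c.toSignedMeasure).totalVariation Set.univ)
    (ne_top_of_le_ne_top hfin hle) hfin |>.mpr hle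
  rw [tvNorm]
  refine this.trans (le_of_eq ?_)
  rw [tvNorm_eq, tvNorm_eq, Measure.add_apply, Measure.add_apply,
    ENNReal.toReal_add (ENNReal.add_ne_top.mpr ⟨measure_ne_top _ _, measure_ne_top _ _⟩)
      (ENNReal.add_ne_top.mpr ⟨measure_ne_top _ _, measure_ne_top _ _⟩),
    ENNReal.toReal_add (measure_ne_top _ _) (measure_ne_top _ _),
    ENNReal.toReal_add (measure_ne_top _ _) (measure_ne_top _ _)]
  ring

lemma tvNorm_quad (a a' b' b : Measure ℝ) [IsFiniteMeasure a] [IsFiniteMeasure a']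
    [IsFiniteMeasure b'] [IsFiniteMeasure b] :
    tvNorm a b ≤ tvNorm a a' + tvNorm a' b' + tvNorm b' b := by
  calc tvNorm a b ≤ tvNorm a a' + tvNorm a' b := tvNorm_triangle _ _ _
    _ ≤ tvNorm a a' + (tvNorm a' b' + tvNorm b' b) :=
        add_le_add_right (tvNorm_triangle _ _ _) _
    _ = _ := by ring

/-- the contraction estimate for the Picard iteration map of the fluid
model of the weighted processor-sharing queue.  With `Δ = ζ δ / (2 ‖w‖_∞)` and two
total-variation-continuous measure-valued paths `μ, η` on `[t₀, t₁]` whose `w`-masses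
stay above `δ`, the difference of the drift integrals up to any
`t ∈ [t₀, min(t₁, t₀ + Δ)]`, tested against any `C¹` function `g` with
`‖g‖_∞ ≤ 1` and `‖g'‖_∞ ≤ 1`, is at most `ζ · sup_{s ∈ [t₀,t₁]} ‖μ(s) − η(s)‖_TV`. -/
theorem stmt_3 (w : ℝ → ℝ) (hwcont : Continuous w) (hwnonneg : ∀ x, 0 ≤ w x)
    (hwbdd : ∃ C, ∀ x, |w x| ≤ C) (hwpos : 0 < supNorm w)
    (δ : ℝ) (hδ : 0 < δ) (ζ : ℝ) (hζ0 : 0 < ζ) (hζ1 : ζ < 1)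
    (Δ : ℝ) (hΔ : Δ = ζ * δ / (2 * supNorm w))
    (t₀ t₁ : ℝ) (ht : t₀ < t₁)
    (μ η : ℝ → Measure ℝ)
    [∀ s, IsFiniteMeasure (μ s)] [∀ s, IsFiniteMeasure (η s)]
    (hμsupp : ∀ s ∈ Set.Icc t₀ t₁, μ s (Set.Iio 0) = 0)
    (hηsupp : ∀ s ∈ Set.Icc t₀ t₁, η s (Set.Iio 0) = 0)
    (hμcont : ∀ s ∈ Set.Icc t₀ t₁, ∀ ε > (0:ℝ), ∃ ρ > (0:ℝ),
      ∀ s' ∈ Set.Icc t₀ t₁, |s' - s| < ρ → tvNorm (μ s) (μ s') < ε)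
    (hηcont : ∀ s ∈ Set.Icc t₀ t₁, ∀ ε > (0:ℝ), ∃ ρ > (0:ℝ),
      ∀ s' ∈ Set.Icc t₀ t₁, |s' - s| < ρ → tvNorm (η s) (η s') < ε)
    (hμw : ∀ s ∈ Set.Icc t₀ t₁, δ ≤ ∫ x, w x ∂(μ s))
    (hηw : ∀ s ∈ Set.Icc t₀ t₁, δ ≤ ∫ x, w x ∂(η s))
    (g g' : ℝ → ℝ) (hg : ∀ x, HasDerivAt g (g' x) x) (hg'cont : Continuous g')
    (hgle : ∀ x, |g x| ≤ 1) (hg'le : ∀ x, |g' x| ≤ 1)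
    (t : ℝ) (htmem : t ∈ Set.Icc t₀ (min t₁ (t₀ + Δ))) :
    |∫ s in t₀..t,
        ((∫ x, g' x * w x ∂(μ s)) / (∫ x, w x ∂(μ s))
          - (∫ x, g' x * w x ∂(η s)) / (∫ x, w x ∂(η s)))|
      ≤ ζ * ⨆ s : Set.Icc t₀ t₁, tvNorm (μ s) (η s) := by
  obtain ⟨C, hC⟩ := hwbdd
  set W := supNorm w with hWdef
  have hW : ∀ x, |w x| ≤ W :=
    fun x => le_ciSup (f := fun x => |w x|) ⟨C, by rintro _ ⟨x, rfl⟩; exact hC x⟩ x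
  -- continuity of the tv distance
  set F : ℝ → ℝ := fun s => tvNorm (μ s) (η s) with hFdef
  have hFcont : ContinuousOn F (Set.Icc t₀ t₁) := by
    intro s hs
    rw [Metric.continuousWithinAt_iff]
    intro ε hε
    obtain ⟨ρ1, hρ1, h1⟩ := hμcont s hs (ε/2) (by linarith)
    obtain ⟨ρ2, hρ2, h2⟩ := hηcont s hs (ε/2) (by linarith)
    refine ⟨min ρ1 ρ2, lt_min hρ1 hρ2, fun y hy hdist => ?_⟩
    rw [Real.dist_eq] at hdist
    have e1 : tvNorm (μ s) (μ y) < ε/2 :=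
      h1 y hy (lt_of_lt_of_le hdist (min_le_left _ _))
    have e2 : tvNorm (η s) (η y) < ε/2 :=
      h2 y hy (lt_of_lt_of_le hdist (min_le_right _ _))
    have fA : tvNorm (μ y) (η y) ≤ tvNorm (μ y) (μ s) + tvNorm (μ s) (η s)
        + tvNorm (η s) (η y) := tvNorm_quad _ _ _ _
    have fB : tvNorm (μ s) (η s) ≤ tvNorm (μ s) (μ y) + tvNorm (μ y) (η y)
        + tvNorm (η y) (η s) := tvNorm_quad _ _ _ _
    rw [tvNorm_symm (μ y) (μ s)] at fA
    rw [tvNorm_symm (η y) (η s)] at fB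
    rw [Real.dist_eq, abs_sub_lt_iff]
    constructor <;> simp only [hFdef] <;> linarith
  have hbddF : BddAbove (F '' Set.Icc t₀ t₁) :=
    (isCompact_Icc.image_of_continuousOn hFcont).bddAbove
  have hMbdd : BddAbove (Set.range fun s : Set.Icc t₀ t₁ => tvNorm (μ s) (η s)) := by
    have : (fun s : Set.Icc t₀ t₁ => tvNorm (μ ↑s) (η ↑s)) = F ∘ Subtype.val := rfl
    rw [this, Set.range_comp, Subtype.range_coe]
    exact hbddF
  set M := ⨆ s : Set.Icc t₀ t₁, tvNorm (μ s) (η s) with hMdef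
  have hM : ∀ s ∈ Set.Icc t₀ t₁, tvNorm (μ s) (η s) ≤ M :=
    fun s hs => le_ciSup hMbdd ⟨s, hs⟩
  have hM0 : 0 ≤ M :=
    le_trans (tvNorm_nonneg _ _) (hM t₀ ⟨le_refl _, le_of_lt ht⟩)
  -- pointwise bound on the integrand
  have hpt : ∀ s ∈ Set.Icc t₀ t₁,
      |(∫ x, g' x * w x ∂(μ s)) / (∫ x, w x ∂(μ s))
        - (∫ x, g' x * w x ∂(η s)) / (∫ x, w x ∂(η s))| ≤ 2 * W * M / δ := by
    intro s hs
    set A := ∫ x, g' x * w x ∂(μ s)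
    set B := ∫ x, w x ∂(μ s)
    set Cc := ∫ x, g' x * w x ∂(η s)
    set D := ∫ x, w x ∂(η s)
    have hBδ : δ ≤ B := hμw s hs
    have hDδ : δ ≤ D := hηw s hs
    have hB0 : 0 < B := lt_of_lt_of_le hδ hBδ
    have hD0 : 0 < D := lt_of_lt_of_le hδ hDδ
    have hgwbd : ∀ x, |g' x * w x| ≤ W := fun x => by
      rw [abs_mul]
      calc |g' x| * |w x| ≤ 1 * W :=
            mul_le_mul (hg'le x) (hW x) (abs_nonneg _) zero_le_one
        _ = W := one_mul W
    have hAC : |A - Cc| ≤ W * tvNorm (μ s) (η s) :=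
      integral_diff_le_tv (μ s) (η s) _ (hg'cont.mul hwcont) W hgwbd
    have hDB : |D - B| ≤ W * tvNorm (μ s) (η s) := by
      have := integral_diff_le_tv (η s) (μ s) w hwcont W hW
      rwa [tvNorm_symm] at this
    have hintgw : Integrable (fun x => g' x * w x) (η s) :=
      ⟨(hg'cont.mul hwcont).aestronglyMeasurable,
        MeasureTheory.HasFiniteIntegral.of_bounded (C := W)
          (Filter.Eventually.of_forall fun x => by
            rw [Real.norm_eq_abs]; exact hgwbd x)⟩
    have hintw : Integrable w (η s) :=
      ⟨hwcont.aestronglyMeasurable,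
        MeasureTheory.HasFiniteIntegral.of_bounded (C := W)
          (Filter.Eventually.of_forall fun x => by
            rw [Real.norm_eq_abs]; exact hW x)⟩
    have hCle : |Cc| ≤ D := by
      have habsmul : (fun x => |g' x| * |w x|) = fun x => |g' x * w x| :=
        funext fun x => (abs_mul _ _).symm
      calc |Cc| ≤ ∫ x, |g' x| * |w x| ∂(η s) := by
            simpa [Real.norm_eq_abs, abs_mul] using
              norm_integral_le_integral_norm (μ := η s) (fun x => g' x * w x)
        _ ≤ ∫ x, w x ∂(η s) := by
            refine integral_mono (habsmul ▸ hintgw.abs) hintw fun x => ?_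
            rw [abs_of_nonneg (hwnonneg x)]
            exact mul_le_of_le_one_left (hwnonneg x) (hg'le x)
    have hid : A / B - Cc / D = (A - Cc) / B + (Cc / D) * ((D - B) / B) := by
      field_simp
      ring
    have hWM : W * tvNorm (μ s) (η s) ≤ W * M :=
      mul_le_mul_of_nonneg_left (hM s hs) (le_of_lt hwpos)
    have t1 : |A - Cc| / B ≤ W * M / δ :=
      div_le_div₀ (by positivity) (hAC.trans hWM) hδ hBδ
    have t3 : |D - B| / B ≤ W * M / δ :=
      div_le_div₀ (by positivity) (hDB.trans hWM) hδ hBδ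
    have t2 : |Cc / D| ≤ 1 := by
      rw [abs_div, abs_of_pos hD0]
      exact (div_le_one hD0).mpr hCle
    calc |A / B - Cc / D|
        = |(A - Cc) / B + (Cc / D) * ((D - B) / B)| := by rw [hid]
      _ ≤ |(A - Cc) / B| + |(Cc / D) * ((D - B) / B)| := abs_add_le _ _
      _ = |A - Cc| / B + |Cc / D| * (|D - B| / B) := by
          rw [abs_div (A - Cc) B, abs_mul, abs_div (D - B) B, abs_of_pos hB0]
      _ ≤ W * M / δ + 1 * (W * M / δ) :=
          add_le_add t1 (mul_le_mul t2 t3 (by positivity) zero_le_one)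
      _ = 2 * W * M / δ := by ring
  -- conclude
  obtain ⟨ht0, ht1'⟩ := htmem
  have htt1 : t ≤ t₁ := le_trans ht1' (min_le_left _ _)
  have htΔ : t - t₀ ≤ Δ := by
    have := le_trans ht1' (min_le_right _ _); linarith
  have hbound := intervalIntegral.norm_integral_le_of_norm_le_const
    (C := 2 * W * M / δ)
    (f := fun s => (∫ x, g' x * w x ∂(μ s)) / (∫ x, w x ∂(μ s))
      - (∫ x, g' x * w x ∂(η s)) / (∫ x, w x ∂(η s)))
    (a := t₀) (b := t) (fun x hx => by
      rw [Set.uIoc_of_le ht0] at hx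
      rw [Real.norm_eq_abs]
      exact hpt x ⟨le_of_lt hx.1, hx.2.trans htt1⟩)
  rw [Real.norm_eq_abs] at hbound
  have habs : |t - t₀| = t - t₀ := abs_of_nonneg (by linarith)
  rw [habs] at hbound
  have hfinal : 2 * W * M / δ * (t - t₀) ≤ 2 * W * M / δ * Δ :=
    mul_le_mul_of_nonneg_left htΔ (by positivity)
  have heq : 2 * W * M / δ * Δ = ζ * M := by
    have hW0 : W ≠ 0 := ne_of_gt hwpos
    have hδ0 : δ ≠ 0 := ne_of_gt hδ
    rw [hΔ]
    field_simp
  calc |∫ s in t₀..t, ((∫ x, g' x * w x ∂(μ s)) / (∫ x, w x ∂(μ s))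
          - (∫ x, g' x * w x ∂(η s)) / (∫ x, w x ∂(η s)))|
      ≤ 2 * W * M / δ * (t - t₀) := hbound
    _ ≤ 2 * W * M / δ * Δ := hfinal
    _ = ζ * M := heq
end

section
/- Let N ≥ 1, let w : [0,∞) → ℝ be continuously differentiable with w(0) = 0 and w'(x) > 0 for all x ≥ 0, let ν₁, …, ν_N > 0, and let R : [0, τ) → ℝ^N be a solution of Rⱼ'(t) = −w(Rⱼ(t))/Σ_{i=1}^N w(Rᵢ(t)), Rⱼ(0) = νⱼ, with Rⱼ(t) > 0 for all t ∈ [0, τ) and all j. If νᵢ ≤ νⱼ for some indices i, j, then Rᵢ(t) ≤ Rⱼ(t) for all t ∈ [0, τ): the ordering of remaining service amounts is preserved by the weighted processor-sharing dynamics. -/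
open Set

/-- `IsWPSSol N w ν τ R` says that `R : [0, τ) → ℝ^N` solves the weighted
processor-sharing dynamics `Rⱼ'(t) = − w(Rⱼ(t)) / Σᵢ w(Rᵢ(t))` with initial condition
`Rⱼ(0) = νⱼ` and remains componentwise strictly positive on `[0, τ)`. -/
def IsWPSSol (N : ℕ) (w : ℝ → ℝ) (ν : Fin N → ℝ) (τ : ℝ) (R : ℝ → Fin N → ℝ) : Prop :=
  (∀ j, R 0 j = ν j) ∧
  (∀ t ∈ Ico (0:ℝ) τ, ∀ j, 0 < R t j) ∧
  (∀ t ∈ Ico (0:ℝ) τ, ∀ j,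
    HasDerivWithinAt (fun s => R s j)
      (-(w (R t j)) / ∑ i, w (R t i)) (Ico (0:ℝ) τ) t)

/-- the weighted processor-sharing dynamics `Rⱼ' = −w(Rⱼ)/Σᵢ w(Rᵢ)`
preserve the initial ordering of the remaining service amounts: if `νᵢ ≤ νⱼ` then
`Rᵢ(t) ≤ Rⱼ(t)` for all `t ∈ [0, τ)`. -/
theorem stmt_8 (N : ℕ) (hN : 1 ≤ N) (w w' : ℝ → ℝ)
    (hw : ∀ x, HasDerivAt w (w' x) x) (hw'cont : Continuous w')
    (hw0 : w 0 = 0) (hw'pos : ∀ x, 0 ≤ x → 0 < w' x)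
    (ν : Fin N → ℝ) (hν : ∀ j, 0 < ν j)
    (τ : ℝ) (R : ℝ → Fin N → ℝ) (hR : IsWPSSol N w ν τ R)
    (i j : Fin N) (hij : ν i ≤ ν j) :
    ∀ t ∈ Ico (0:ℝ) τ, R t i ≤ R t j := by
  obtain ⟨hR0, hRpos, hRd⟩ := hR
  haveI : Nonempty (Fin N) := ⟨⟨0, hN⟩⟩
  have hwc : Continuous w := by
    have : Differentiable ℝ w := fun x => (hw x).differentiableAt
    exact this.continuous
  -- w is positive on positives
  have hwmono : StrictMonoOn w (Ici 0) := by
    apply strictMonoOn_of_deriv_pos (convex_Ici 0) hwc.continuousOn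
    intro x hx
    rw [interior_Ici] at hx
    rw [(hw x).deriv]
    exact hw'pos x (le_of_lt hx)
  have hwpos : ∀ x : ℝ, 0 < x → 0 < w x := by
    intro x hx
    have := hwmono (self_mem_Ici) (le_of_lt hx) hx
    rwa [hw0] at this
  intro t₁ ht₁
  by_contra hcon
  push_neg at hcon
  have ht₁0 : 0 ≤ t₁ := ht₁.1
  have ht₁τ : t₁ < τ := ht₁.2
  have hsub : Icc (0:ℝ) t₁ ⊆ Ico (0:ℝ) τ := fun t ht => ⟨ht.1, lt_of_le_of_lt ht.2 ht₁τ⟩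
  -- continuity of components on [0, t₁]
  have hcont : ∀ k, ContinuousOn (fun s => R s k) (Icc 0 t₁) := by
    intro k
    have h1 : ContinuousOn (fun s => R s k) (Ico 0 τ) :=
      fun t ht => (hRd t ht k).continuousWithinAt
    exact h1.mono hsub
  -- the set where the order holds
  set A : Set ℝ := {t ∈ Icc (0:ℝ) t₁ | R t i ≤ R t j} with hA
  have hAclosed : IsClosed A := by
    have : A = Icc (0:ℝ) t₁ ∩ (fun t => R t i - R t j) ⁻¹' Iic 0 := by
      ext t; simp [hA, sub_nonpos]
    rw [this]
    exact ContinuousOn.preimage_isClosed_of_isClosed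
      ((hcont i).sub (hcont j)) isClosed_Icc isClosed_Iic
  have h0A : (0:ℝ) ∈ A := by
    refine ⟨⟨le_refl 0, ht₁0⟩, ?_⟩
    rw [hR0 i, hR0 j]; exact hij
  have hAbdd : BddAbove A := ⟨t₁, fun t ht => ht.1.2⟩
  set t₀ := sSup A with ht₀
  have ht₀A : t₀ ∈ A := hAclosed.csSup_mem ⟨0, h0A⟩ hAbdd
  have ht₀mem : t₀ ∈ Icc (0:ℝ) t₁ := ht₀A.1
  have ht₀lt : t₀ < t₁ := by
    rcases lt_or_eq_of_le ht₀mem.2 with h | h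
    · exact h
    · exfalso; exact hcon.not_ge (h ▸ ht₀A.2)
  -- beyond t₀ the strict reversed order holds
  have hrev : ∀ t ∈ Ioc t₀ t₁, R t j < R t i := by
    intro t ht
    by_contra hle
    push_neg at hle
    have : t ∈ A := ⟨⟨le_trans ht₀mem.1 (le_of_lt ht.1), ht.2⟩, hle⟩
    exact absurd (le_csSup hAbdd this) (not_le_of_gt ht.1)
  -- at t₀ we have equality
  have hEq : R t₀ i = R t₀ j := by
    rcases lt_or_eq_of_le ht₀A.2 with hlt | heq
    · exfalso
      -- R t₀ i < R t₀ j; by continuity this persists slightly to the right, contradiction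
      have hcw : ContinuousWithinAt (fun t => R t j - R t i) (Icc 0 t₁) t₀ :=
        ((hcont j).sub (hcont i)) t₀ ht₀mem
      have hpos0 : (0:ℝ) < R t₀ j - R t₀ i := sub_pos.mpr hlt
      have hev : ∀ᶠ t in nhdsWithin t₀ (Icc (0:ℝ) t₁), 0 < R t j - R t i :=
        hcw.eventually (eventually_gt_nhds hpos0)
      have hle : nhdsWithin t₀ (Ioc t₀ t₁) ≤ nhdsWithin t₀ (Icc (0:ℝ) t₁) :=
        nhdsWithin_mono _ (fun t ht => ⟨le_trans ht₀mem.1 (le_of_lt ht.1), ht.2⟩)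
      have hev' : ∀ᶠ t in nhdsWithin t₀ (Ioc t₀ t₁), 0 < R t j - R t i := hle hev
      have hmem : ∀ᶠ t in nhdsWithin t₀ (Ioc t₀ t₁), t ∈ Ioc t₀ t₁ :=
        self_mem_nhdsWithin
      haveI : (nhdsWithin t₀ (Ioc t₀ t₁)).NeBot := by
        apply mem_closure_iff_nhdsWithin_neBot.mp
        rw [closure_Ioc (ne_of_lt ht₀lt)]
        exact ⟨le_refl t₀, le_of_lt ht₀lt⟩
      obtain ⟨t, htpos, htmem⟩ := (hev'.and hmem).exists
      exact absurd (hrev t htmem) (not_lt_of_gt (sub_pos.mp htpos))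
    · exact heq.symm ▸ le_antisymm (heq ▸ le_refl _) ht₀A.2 ▸ heq.symm ▸ rfl
  -- now set up ODE uniqueness on [t₀, t₁]
  set S : ℝ → ℝ := fun t => ∑ k, w (R t k) with hS
  have hScont : ContinuousOn S (Icc 0 t₁) := by
    apply continuousOn_finset_sum
    intro k _
    exact hwc.comp_continuousOn (hcont k)
  have hSpos : ∀ t ∈ Icc (0:ℝ) t₁, 0 < S t := by
    intro t ht
    apply Finset.sum_pos
    · intro k _
      exact hwpos _ (hRpos t (hsub ht) k)
    · exact Finset.univ_nonempty
  obtain ⟨tm, htm, hminS⟩ := isCompact_Icc.exists_isMinOn ⟨0, left_mem_Icc.mpr ht₁0⟩ hScont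
  set ε := S tm with hε
  have hεpos : 0 < ε := hSpos tm htm
  have hεle : ∀ t ∈ Icc (0:ℝ) t₁, ε ≤ S t := fun t ht => hminS ht
  -- bound on components i and j
  obtain ⟨Mi, hMi⟩ := isCompact_Icc.exists_bound_of_continuousOn (hcont i)
  obtain ⟨Mj, hMj⟩ := isCompact_Icc.exists_bound_of_continuousOn (hcont j)
  set M := max Mi Mj with hM
  have hmemM : ∀ t ∈ Icc (0:ℝ) t₁, ∀ k, k = i ∨ k = j → R t k ∈ Icc (0:ℝ) M := by
    intro t ht k hk
    constructor
    · exact le_of_lt (hRpos t (hsub ht) k)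
    · rcases hk with rfl | rfl
      · exact le_trans (le_abs_self _) (le_trans (hMi t ht) (le_max_left _ _))
      · exact le_trans (le_abs_self _) (le_trans (hMj t ht) (le_max_right _ _))
  -- bound on w' on [0, M]
  obtain ⟨L, hL⟩ := isCompact_Icc.exists_bound_of_continuousOn
    (s := Icc (0:ℝ) M) hw'cont.continuousOn
  have hL0 : 0 ≤ L := le_trans (norm_nonneg _) (hL 0 ⟨le_refl 0, le_trans (hRpos 0 (hsub (left_mem_Icc.mpr ht₁0)) i).le ((hmemM 0 (left_mem_Icc.mpr ht₁0) i (Or.inl rfl)).2)⟩)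
  -- w is L-Lipschitz on [0, M]
  have hwLip : ∀ x ∈ Icc (0:ℝ) M, ∀ y ∈ Icc (0:ℝ) M, |w x - w y| ≤ L * |x - y| := by
    intro x hx y hy
    have := Convex.norm_image_sub_le_of_norm_hasDerivWithin_le
      (f := w) (f' := w') (s := Icc (0:ℝ) M)
      (fun z hz => (hw z).hasDerivWithinAt) hL (convex_Icc 0 M) hy hx
    simpa [Real.norm_eq_abs] using this
  -- the clamped vector field
  set π : ℝ → ℝ := fun t => max 0 (min t t₁) with hπ
  have hπmem : ∀ t, π t ∈ Icc (0:ℝ) t₁ :=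
    fun t => ⟨le_max_left _ _, max_le ht₁0 (min_le_right _ _)⟩
  have hπid : ∀ t ∈ Icc (0:ℝ) t₁, π t = t := by
    intro t ht
    simp [hπ, min_eq_left ht.2, max_eq_right ht.1]
  set v : ℝ → ℝ → ℝ := fun t x => -(w x) / S (π t) with hv
  set K : NNReal := Real.toNNReal (L / ε) with hK
  have hvLip : ∀ t, LipschitzOnWith K (v t) (Icc (0:ℝ) M) := by
    intro t
    rw [lipschitzOnWith_iff_dist_le_mul]
    intro x hx y hy
    have hSt : 0 < S (π t) := hSpos _ (hπmem t)
    have hSt' : ε ≤ S (π t) := hεle _ (hπmem t)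
    have h1 : dist (v t x) (v t y) = |w x - w y| / S (π t) := by
      rw [Real.dist_eq, hv]
      rw [div_sub_div_same, abs_div, abs_of_pos hSt]
      congr 1
      rw [← abs_neg]; ring_nf
    rw [h1, Real.dist_eq]
    have hKval : (K : ℝ) = L / ε := Real.coe_toNNReal _ (div_nonneg hL0 hεpos.le)
    rw [hKval]
    rw [div_le_iff₀ hSt]
    calc |w x - w y| ≤ L * |x - y| := hwLip x hx y hy
      _ = L / ε * |x - y| * ε := by field_simp
      _ ≤ L / ε * |x - y| * S (π t) := by
          apply mul_le_mul_of_nonneg_left hSt'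
          positivity
  -- derivatives within Ici t on [t₀, t₁)
  have hIcisub : ∀ t ∈ Ico t₀ t₁, Ico (0:ℝ) τ ∈ nhdsWithin t (Ici t) := by
    intro t ht
    have ht0 : 0 ≤ t := le_trans ht₀mem.1 ht.1
    have htτ : t < τ := lt_trans ht.2 ht₁τ
    apply mem_nhdsWithin.mpr
    exact ⟨Iio τ, isOpen_Iio, htτ, fun x hx => ⟨le_trans ht0 hx.2, hx.1⟩⟩
  have hIccsub : Icc t₀ t₁ ⊆ Icc (0:ℝ) t₁ := fun t ht => ⟨le_trans ht₀mem.1 ht.1, ht.2⟩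
  have hderiv : ∀ k, k = i ∨ k = j → ∀ t ∈ Ico t₀ t₁,
      HasDerivWithinAt (fun s => R s k) (v t (R t k)) (Ici t) t := by
    intro k _ t ht
    have htmem : t ∈ Icc (0:ℝ) t₁ := ⟨le_trans ht₀mem.1 ht.1, ht.2.le⟩
    have := (hRd t (hsub htmem) k).mono_of_mem_nhdsWithin (hIcisub t ht)
    have hval : v t (R t k) = -w (R t k) / ∑ i, w (R t i) := by
      rw [hv]
      simp only
      rw [hπid t htmem]
    rw [hval]; exact this
  have hmem' : ∀ k, k = i ∨ k = j → ∀ t ∈ Ico t₀ t₁, R t k ∈ Icc (0:ℝ) M := by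
    intro k hk t ht
    exact hmemM t ⟨le_trans ht₀mem.1 ht.1, ht.2.le⟩ k hk
  have huniq := ODE_solution_unique_of_mem_Icc_right (f := fun s => R s i) (g := fun s => R s j) (fun t _ => hvLip t)
    (((hcont i).mono hIccsub)) (hderiv i (Or.inl rfl)) (hmem' i (Or.inl rfl))
    (((hcont j).mono hIccsub)) (hderiv j (Or.inr rfl)) (hmem' j (Or.inr rfl))
    hEq
  have h2 : R t₁ i = R t₁ j := huniq (right_mem_Icc.mpr ht₀lt.le)
  exact hcon.not_ge h2.le
end
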